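/- arXiv:1706.03852 — 2 statements merged into one kernel-verified Lean document; each statement's English description precedes it below -/
import Mathlib

section
/- The bogus ORAM construction satisfies the Goldreich–Ostrovsky definition restricted to finite input sequences: if the output-length random variables |ORAMWrapper(RAM^f)(A₁)| and |ORAMWrapper(RAM^f)(A₂)| are identically distributed, then the full output sequences ORAMWrapper(RAM^f)(A₁) and ORAMWrapper(RAM^f)(A₂) are identically distributed. -/
open MeasureTheory

/-- The bogus ORAM wrapper: first output `RAMf A ω`, then pad with a suffix
(drawn from an a-priori fixed distribution depending only on the required padding
length) so that the total output length equals `enc (RAMf A ω)`. -/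
def bogusWrap {α β Ω Ω' : Type*} (RAMf : List α → Ω → List β)
    (enc : List β → ℕ) (pad : ℕ → Ω' → List β) (A : List α) (p : Ω × Ω') : List β :=
  RAMf A p.1 ++ pad (enc (RAMf A p.1) - (RAMf A p.1).length) p.2

section BogusAux

variable {α β Ω Ω' : Type*} [MeasurableSpace Ω] [MeasurableSpace Ω']
    [MeasurableSpace (List β)] [MeasurableSingletonClass (List β)]

/-- If `ℓ ∘ fst` is a.e.-measurable with respect to a product of probability
measures, then `ℓ` is a.e.-measurable with respect to the first factor. -/
lemma aemeasurable_of_comp_fst {μ : Measure Ω} {ν : Measure Ω'}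
    [SFinite μ] [SFinite ν] (hν : ν ≠ 0) {γ : Type*} [MeasurableSpace γ] {ℓ : Ω → γ}
    (h : AEMeasurable (fun p : Ω × Ω' => ℓ p.1) (μ.prod ν)) : AEMeasurable ℓ μ := by
  obtain ⟨g, hg, hge⟩ := h
  have h2 : ∀ᵐ q ∂ν.prod μ, ℓ (Prod.swap q).1 = g (Prod.swap q) :=
    (Measure.measurePreserving_swap).quasiMeasurePreserving.ae hge
  have h3 : ∀ᵐ ω' ∂ν, ∀ᵐ ω ∂μ, ℓ ω = g (ω, ω') := by
    have := Measure.ae_ae_of_ae_prod h2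
    simpa using this
  haveI : (MeasureTheory.ae ν).NeBot := ae_neBot.2 hν
  obtain ⟨ω', hω'⟩ := h3.exists
  exact ⟨fun ω => g (ω, ω'), hg.comp (measurable_id.prodMk measurable_const), hω'⟩

lemma bogus_aux
    (μ : Measure Ω) (ν : Measure Ω') [IsProbabilityMeasure μ] [IsProbabilityMeasure ν]
    (RAMf : List α → Ω → List β)
    (enc : List β → ℕ) (henc_inj : Function.Injective enc)
    (henc_ge : ∀ S : List β, S.length ≤ enc S)
    (pad : ℕ → Ω' → List β) (hpad_len : ∀ k ω', (pad k ω').length = k)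
    (A₁ A₂ : List α)
    (hlen : (μ.prod ν).map (fun p => (bogusWrap RAMf enc pad A₁ p).length) =
      (μ.prod ν).map (fun p => (bogusWrap RAMf enc pad A₂ p).length))
    (h1 : AEMeasurable (bogusWrap RAMf enc pad A₁) (μ.prod ν)) :
    (μ.prod ν).map (bogusWrap RAMf enc pad A₁) =
      (μ.prod ν).map (bogusWrap RAMf enc pad A₂) := by
  haveI : Countable (List β) := (countable_iff_exists_injective (List β)).2 ⟨enc, henc_inj⟩
  have hν0 : ν ≠ 0 := IsProbabilityMeasure.ne_zero ν
  -- length of the wrapped output is `enc (RAMf A ω)`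
  have hlenf : ∀ (A : List α) (p : Ω × Ω'),
      (bogusWrap RAMf enc pad A p).length = enc (RAMf A p.1) := by
    intro A p
    simp [bogusWrap, hpad_len, Nat.add_sub_cancel' (henc_ge _)]
  set ℓ₁ : Ω → ℕ := fun ω => enc (RAMf A₁ ω) with hℓ₁
  set ℓ₂ : Ω → ℕ := fun ω => enc (RAMf A₂ ω) with hℓ₂
  have hlen' : (μ.prod ν).map (fun p : Ω × Ω' => ℓ₁ p.1) =
      (μ.prod ν).map (fun p : Ω × Ω' => ℓ₂ p.1) := by
    simpa only [hlenf] using hlen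
  have hl1fst : AEMeasurable (fun p : Ω × Ω' => ℓ₁ p.1) (μ.prod ν) := by
    have := (measurable_of_countable (List.length : List β → ℕ)).comp_aemeasurable h1
    exact this.congr (Filter.Eventually.of_forall fun p => hlenf A₁ p)
  have hl1 : AEMeasurable ℓ₁ μ := aemeasurable_of_comp_fst hν0 hl1fst
  have hl2fst : AEMeasurable (fun p : Ω × Ω' => ℓ₂ p.1) (μ.prod ν) := by
    by_contra hcon
    rw [Measure.map_of_not_aemeasurable hcon] at hlen'
    haveI := Measure.isProbabilityMeasure_map hl1fst
    exact (IsProbabilityMeasure.ne_zero _) hlen'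
  have hl2 : AEMeasurable ℓ₂ μ := aemeasurable_of_comp_fst hν0 hl2fst
  -- the distributions of the lengths agree
  have hfst : (μ.prod ν).map Prod.fst = μ := by
    simp [Measure.map_fst_prod]
  have hmap_comp : ∀ (ℓ : Ω → ℕ), AEMeasurable ℓ μ →
      (μ.prod ν).map (fun p : Ω × Ω' => ℓ p.1) = μ.map ℓ := by
    intro ℓ hl
    have : (μ.prod ν).map (ℓ ∘ Prod.fst) = ((μ.prod ν).map Prod.fst).map ℓ := by
      refine (AEMeasurable.map_map_of_aemeasurable ?_ measurable_fst.aemeasurable).symm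
      rw [hfst]; exact hl
    rw [show (fun p : Ω × Ω' => ℓ p.1) = ℓ ∘ Prod.fst from rfl, this, hfst]
  have hmapeq : μ.map ℓ₁ = μ.map ℓ₂ := by
    rw [← hmap_comp ℓ₁ hl1, ← hmap_comp ℓ₂ hl2, hlen']
  -- decoding
  set dec : ℕ → List β := Function.invFun enc with hdec_def
  have hdec : ∀ S : List β, dec (enc S) = S := fun S =>
    Function.leftInverse_invFun henc_inj S
  set P : ℕ → Ω' → List β := fun n ω' => dec n ++ pad (n - (dec n).length) ω' with hP_def
  have hfP : ∀ (A : List α) (p : Ω × Ω'),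
      bogusWrap RAMf enc pad A p = P (enc (RAMf A p.1)) p.2 := by
    intro A p
    simp only [hP_def, bogusWrap, hdec]
  -- key measurability of the padding sections at length values of positive mass
  have hP_meas : ∀ n : ℕ, (μ.map ℓ₁) {n} ≠ 0 → AEMeasurable (P n) ν := by
    intro n hn
    obtain ⟨g, hgm, hge⟩ := h1
    have hae1 : ∀ᵐ ω ∂μ, ∀ᵐ ω' ∂ν,
        bogusWrap RAMf enc pad A₁ (ω, ω') = g (ω, ω') := Measure.ae_ae_of_ae_prod hge
    have hgood : ∀ᵐ ω ∂μ, ℓ₁ ω = hl1.mk ℓ₁ ω ∧ ∀ᵐ ω' ∂ν,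
        bogusWrap RAMf enc pad A₁ (ω, ω') = g (ω, ω') := hl1.ae_eq_mk.and hae1
    have hpos : μ (hl1.mk ℓ₁ ⁻¹' {n}) ≠ 0 := by
      rw [← Measure.map_apply hl1.measurable_mk (measurableSet_singleton n),
        ← Measure.map_congr hl1.ae_eq_mk]
      exact hn
    have hpos2 : μ (hl1.mk ℓ₁ ⁻¹' {n} ∩ {ω | ℓ₁ ω = hl1.mk ℓ₁ ω ∧ ∀ᵐ ω' ∂ν,
        bogusWrap RAMf enc pad A₁ (ω, ω') = g (ω, ω')}) ≠ 0 := by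
      intro h0
      apply hpos
      have : μ (hl1.mk ℓ₁ ⁻¹' {n}) ≤ 0 := by
        calc μ (hl1.mk ℓ₁ ⁻¹' {n})
            ≤ μ (hl1.mk ℓ₁ ⁻¹' {n} ∩ {ω | ℓ₁ ω = hl1.mk ℓ₁ ω ∧ ∀ᵐ ω' ∂ν,
                bogusWrap RAMf enc pad A₁ (ω, ω') = g (ω, ω')}) +
              μ {ω | ¬(ℓ₁ ω = hl1.mk ℓ₁ ω ∧ ∀ᵐ ω' ∂ν,
                bogusWrap RAMf enc pad A₁ (ω, ω') = g (ω, ω'))} := by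
              refine (measure_mono ?_).trans (measure_union_le _ _)
              intro ω hω
              by_cases hcase : ℓ₁ ω = hl1.mk ℓ₁ ω ∧ ∀ᵐ ω' ∂ν,
                bogusWrap RAMf enc pad A₁ (ω, ω') = g (ω, ω')
              · exact Or.inl ⟨hω, hcase⟩
              · exact Or.inr hcase
        _ = 0 := by rw [h0, (ae_iff.1 hgood : _)]; simp
      exact le_antisymm this (zero_le)
    obtain ⟨ω₀, hω₀mem, hω₀eq, hω₀ae⟩ := nonempty_of_measure_ne_zero hpos2
    have hω₀n : ℓ₁ ω₀ = n := by
      rw [hω₀eq]; exact hω₀mem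
    have hPeq : ∀ ω', P n ω' = bogusWrap RAMf enc pad A₁ (ω₀, ω') := by
      intro ω'
      rw [hfP A₁ (ω₀, ω')]
      show P n ω' = P (ℓ₁ ω₀) ω'
      rw [hω₀n]
    refine ⟨fun ω' => g (ω₀, ω'), hgm.comp (measurable_const.prodMk measurable_id), ?_⟩
    filter_upwards [hω₀ae] with ω' hω' using by rw [hPeq ω', hω']
  -- the measurable kernel-like map
  classical
  set Q : ℕ → Ω' → List β := fun n =>
    if h : AEMeasurable (P n) ν then h.mk (P n) else fun _ => ([] : List β) with hQ_def
  have hQm : ∀ n, Measurable (Q n) := by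
    intro n
    simp only [hQ_def]
    split_ifs with h
    · exact h.measurable_mk
    · exact measurable_const
  set K : Ω' × ℕ → List β := fun x => Q x.2 x.1 with hK_def
  have hK : Measurable K := measurable_from_prod_countable_left fun n => hQm n
  -- the null set of bad length values
  set N : Set ℕ := {n | (μ.map ℓ₁) {n} = 0} with hN_def
  have hNnull : (μ.map ℓ₁) N = 0 := by
    rw [← Set.biUnion_of_singleton N]
    exact (measure_biUnion_null_iff (Set.to_countable N)).2 fun n hn => hn
  -- main step: for any input with the same length distribution, the output
  -- distribution is `(ν.prod (μ.map ℓ₁)).map K`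
  have key : ∀ (A : List α) (hA : AEMeasurable (fun ω => enc (RAMf A ω)) μ)
      (hAeq : μ.map (fun ω => enc (RAMf A ω)) = μ.map ℓ₁),
      (μ.prod ν).map (bogusWrap RAMf enc pad A) = (ν.prod (μ.map ℓ₁)).map K := by
    intro A hA hAeq
    set ℓ : Ω → ℕ := fun ω => enc (RAMf A ω) with hℓ_def
    set L : Ω → ℕ := hA.mk ℓ with hL_def
    have hLm : Measurable L := hA.measurable_mk
    have hmapL : μ.map L = μ.map ℓ₁ := by
      rw [← Measure.map_congr hA.ae_eq_mk]; exact hAeq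
    -- a measurable null hull for the bad padding events
    set T : ℕ → Set Ω' := fun n =>
      if (μ.map ℓ₁) {n} = 0 then ∅ else toMeasurable ν {ω' | Q n ω' ≠ P n ω'} with hT_def
    have hTm : ∀ n, MeasurableSet (T n) := by
      intro n
      simp only [hT_def]
      split_ifs
      · exact MeasurableSet.empty
      · exact measurableSet_toMeasurable ν _
    have hTnull : ∀ n, ν (T n) = 0 := by
      intro n
      simp only [hT_def]
      split_ifs with h
      · simp
      · rw [measure_toMeasurable]
        have := hP_meas n h
        rw [hQ_def]
        simp only [this, dif_pos]
        have := this.ae_eq_mk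
        rw [Filter.EventuallyEq, ae_iff] at this
        simpa [ne_comm] using this
    -- the bad set in the product space
    have h_ae : (fun p : Ω × Ω' => K (p.2, L p.1)) =ᵐ[μ.prod ν]
        bogusWrap RAMf enc pad A := by
      have hE1 : ∀ᵐ p : Ω × Ω' ∂μ.prod ν, ℓ p.1 = L p.1 :=
        Measure.quasiMeasurePreserving_fst.ae hA.ae_eq_mk
      have hE2 : ∀ᵐ p : Ω × Ω' ∂μ.prod ν, L p.1 ∉ N := by
        rw [ae_iff]
        have : {p : Ω × Ω' | ¬ L p.1 ∉ N} ⊆ (L ⁻¹' N) ×ˢ Set.univ := by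
          intro p hp
          simp only [Set.mem_setOf_eq, not_not] at hp
          exact ⟨hp, trivial⟩
        refine measure_mono_null this ?_
        rw [Measure.prod_prod]
        have : μ (L ⁻¹' N) = 0 := by
          rw [← Measure.map_apply hLm (Set.to_countable N).measurableSet, hmapL]
          exact hNnull
        rw [this, zero_mul]
      have hE3 : ∀ᵐ p : Ω × Ω' ∂μ.prod ν, p.2 ∉ T (L p.1) := by
        rw [ae_iff]
        have : {p : Ω × Ω' | ¬ p.2 ∉ T (L p.1)} ⊆
            ⋃ n : ℕ, (L ⁻¹' {n}) ×ˢ T n := by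
          intro p hp
          simp only [Set.mem_setOf_eq, not_not] at hp
          exact Set.mem_iUnion.2 ⟨L p.1, ⟨rfl, hp⟩⟩
        refine measure_mono_null this (measure_iUnion_null fun n => ?_)
        rw [Measure.prod_prod, hTnull n, mul_zero]
      filter_upwards [hE1, hE2, hE3] with p h1' h2' h3'
      have hQn : Q (L p.1) p.2 = P (L p.1) p.2 := by
        by_contra hne
        apply h3'
        simp only [hT_def]
        simp only [hN_def, Set.mem_setOf_eq] at h2'
        rw [if_neg h2']
        exact subset_toMeasurable ν _ hne
      show K (p.2, L p.1) = bogusWrap RAMf enc pad A p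
      rw [hfP A p]
      show Q (L p.1) p.2 = P (ℓ p.1) p.2
      rw [hQn, h1']
    -- compute the pushforward
    have hinner : Measurable (fun p : Ω × Ω' => (p.2, L p.1)) :=
      measurable_snd.prodMk (hLm.comp measurable_fst)
    have hinner_eq : (μ.prod ν).map (fun p : Ω × Ω' => (p.2, L p.1)) =
        ν.prod (μ.map ℓ₁) := by
      have hcomp : (fun p : Ω × Ω' => (p.2, L p.1)) =
          (Prod.map (id : Ω' → Ω') L) ∘ Prod.swap := rfl
      rw [hcomp, ← Measure.map_map (measurable_id.prodMap hLm) measurable_swap,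
        Measure.prod_swap, ← Measure.map_prod_map _ _ measurable_id hLm,
        Measure.map_id, hmapL]
    calc (μ.prod ν).map (bogusWrap RAMf enc pad A)
        = (μ.prod ν).map (fun p : Ω × Ω' => K (p.2, L p.1)) :=
          (Measure.map_congr h_ae).symm
      _ = ((μ.prod ν).map (fun p : Ω × Ω' => (p.2, L p.1))).map K :=
          (Measure.map_map hK hinner).symm
      _ = (ν.prod (μ.map ℓ₁)).map K := by rw [hinner_eq]
  rw [key A₁ hl1 rfl, key A₂ hl2 hmapeq.symm]

end BogusAux

/-- The bogus ORAM construction satisfies the Goldreich–Ostrovsky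
definition restricted to finite input sequences: identically distributed output
lengths imply identically distributed output sequences. -/
theorem bogusORAM_satisfies_GO_finite
    {α β Ω Ω' : Type*} [MeasurableSpace Ω] [MeasurableSpace Ω']
    [MeasurableSpace (List β)] [MeasurableSingletonClass (List β)]
    (μ : Measure Ω) (ν : Measure Ω') [IsProbabilityMeasure μ] [IsProbabilityMeasure ν]
    (RAMf : List α → Ω → List β)
    (enc : List β → ℕ) (henc_inj : Function.Injective enc)
    (henc_ge : ∀ S : List β, S.length ≤ enc S) (henc_pos : ∀ S : List β, 0 < enc S)
    (pad : ℕ → Ω' → List β) (hpad_len : ∀ k ω', (pad k ω').length = k)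
    (A₁ A₂ : List α)
    (hlen : (μ.prod ν).map (fun p => (bogusWrap RAMf enc pad A₁ p).length) =
      (μ.prod ν).map (fun p => (bogusWrap RAMf enc pad A₂ p).length)) :
    (μ.prod ν).map (bogusWrap RAMf enc pad A₁) =
      (μ.prod ν).map (bogusWrap RAMf enc pad A₂) := by
  by_cases h1 : AEMeasurable (bogusWrap RAMf enc pad A₁) (μ.prod ν)
  · exact bogus_aux μ ν RAMf enc henc_inj henc_ge pad hpad_len A₁ A₂ hlen h1
  · by_cases h2 : AEMeasurable (bogusWrap RAMf enc pad A₂) (μ.prod ν)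
    · exact (bogus_aux μ ν RAMf enc henc_inj henc_ge pad hpad_len A₂ A₁ hlen.symm h2).symm
    · rw [Measure.map_of_not_aemeasurable h1, Measure.map_of_not_aemeasurable h2]
end

section
/- Unlinkability of Path ORAM path accesses: if on each logical access to a block the block's leaf label is resampled uniformly at random from the 2^L leaves independently of all past randomness, then the sequence of observed accessed paths is a sequence of i.i.d. uniform random variables over the leaves, and in particular its distribution is independent of the logical input sequence. -/
/-- The sequence of observed paths in Path ORAM.  The randomness consists of the
initial (uniform, independent) leaf labels `ω.1 : Block → Fin (2^L)` and the fresh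
(uniform, independent) labels `ω.2 i` drawn at each access `i`.  The path observed at
access `i` is the current label of block `A i`: the label freshly drawn at the most
recent previous access to the same block, or the initial label if there is none. -/
lemma uniform_map_equiv {α β : Type*} [Fintype α] [Nonempty α] [Fintype β] [Nonempty β]
    (e : α ≃ β) : (PMF.uniformOfFintype α).map e = PMF.uniformOfFintype β := by
  ext b
  rw [PMF.map_apply, tsum_eq_single (e.symm b)]
  · simp [Fintype.card_congr e]
  · intro a ha
    rw [if_neg]
    intro h
    exact ha (by rw [h, Equiv.symm_apply_apply])

lemma uniform_map_fst {β γ : Type*} [Fintype β] [Nonempty β] [Fintype γ] [Nonempty γ] :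
    (PMF.uniformOfFintype (β × γ)).map Prod.fst = PMF.uniformOfFintype β := by
  classical
  ext b
  rw [PMF.map_apply, tsum_fintype]
  simp only [PMF.uniformOfFintype_apply, Fintype.card_prod]
  rw [Fintype.sum_prod_type]
  have h1 : ∀ x : β, (∑ _y : γ, if b = x then (↑(Fintype.card β * Fintype.card γ) : ENNReal)⁻¹ else 0)
      = if b = x then (Fintype.card γ : ENNReal) * (↑(Fintype.card β * Fintype.card γ))⁻¹ else 0 := by
    intro x
    split <;> simp [Finset.sum_const, mul_comm]
  simp_rw [h1]
  rw [Finset.sum_ite_eq Finset.univ b]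
  simp only [Finset.mem_univ, if_true]
  rw [Nat.cast_mul, ENNReal.mul_inv (by simp [Fintype.card_ne_zero]) (by simp)]
  rw [← mul_assoc, mul_comm (Fintype.card γ : ENNReal), mul_assoc,
    ENNReal.mul_inv_cancel (by simp [Fintype.card_ne_zero]) (by simp), mul_one]

def observedPaths {Block : Type*} [DecidableEq Block] (L n : ℕ)
    (A : Fin n → Block)
    (ω : (Block → Fin (2 ^ L)) × (Fin n → Fin (2 ^ L))) : Fin n → Fin (2 ^ L) :=
  fun i =>
    let prev : Finset (Fin n) := Finset.univ.filter fun j => j < i ∧ A j = A i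
    if h : prev.Nonempty then ω.2 (prev.max' h) else ω.1 (A i)

/-- The index map: which coordinate of the randomness is revealed at access `i`. -/
def accessIndex {Block : Type*} [DecidableEq Block] {n : ℕ} (A : Fin n → Block)
    (i : Fin n) : Block ⊕ Fin n :=
  if h : (Finset.univ.filter fun j => j < i ∧ A j = A i).Nonempty then
    Sum.inr ((Finset.univ.filter fun j => j < i ∧ A j = A i).max' h)
  else Sum.inl (A i)

lemma accessIndex_ne {Block : Type*} [DecidableEq Block] {n : ℕ} (A : Fin n → Block)
    {i i' : Fin n} (hlt : i < i') : accessIndex A i ≠ accessIndex A i' := by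
  intro h
  unfold accessIndex at h

  split_ifs at h with h1 h2 h2
  · -- both inr
    have hj := Sum.inr.inj h
    have hjmem := Finset.max'_mem _ h1
    rw [Finset.mem_filter] at hjmem
    have hjmem' := Finset.max'_mem _ h2
    rw [Finset.mem_filter] at hjmem'
    have hAi : A i = A i' := by rw [← hjmem.2.2, hj, hjmem'.2.2]
    have himem : i ∈ Finset.univ.filter fun j => j < i' ∧ A j = A i' :=
      Finset.mem_filter.mpr ⟨Finset.mem_univ _, hlt, hAi⟩
    have hle := Finset.le_max' _ i himem
    rw [← hj] at hle
    exact absurd hjmem.2.1 (not_lt.mpr hle)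
  all_goals try simp at h
  all_goals exact h2 ⟨i, Finset.mem_filter.mpr ⟨Finset.mem_univ _, hlt, h⟩⟩

lemma accessIndex_injective {Block : Type*} [DecidableEq Block] {n : ℕ} (A : Fin n → Block) :
    Function.Injective (accessIndex A) := by
  intro i i' h
  rcases lt_trichotomy i i' with hlt | heq | hlt
  · exact absurd h (accessIndex_ne A hlt)
  · exact heq
  · exact absurd h.symm (accessIndex_ne A hlt)

lemma observedPaths_eq {Block : Type*} [DecidableEq Block] (L n : ℕ)
    (A : Fin n → Block)
    (ω : (Block → Fin (2 ^ L)) × (Fin n → Fin (2 ^ L))) (i : Fin n) :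
    observedPaths L n A ω i =
      ((Equiv.sumArrowEquivProdArrow Block (Fin n) (Fin (2 ^ L))).symm ω) (accessIndex A i) := by
  unfold observedPaths accessIndex
  by_cases h : (Finset.univ.filter fun j => j < i ∧ A j = A i).Nonempty <;>
    simp [h, Equiv.sumArrowEquivProdArrow]

/-- Unlinkability of Path ORAM path accesses: since each accessed leaf
label was set by an independent uniform draw, the observed sequence of paths
`(s₁, …, sₙ)` is i.i.d. uniform on the `2^L` leaves — i.e., its distribution is the
uniform distribution on `(Fin (2^L))ⁿ`, regardless of the logical input sequence `A`. -/
theorem pathORAM_observed_paths_uniform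
    {Block : Type*} [Fintype Block] [DecidableEq Block] (L n : ℕ)
    (A : Fin n → Block) :
    (PMF.uniformOfFintype ((Block → Fin (2 ^ L)) × (Fin n → Fin (2 ^ L)))).map
        (observedPaths L n A) =
      PMF.uniformOfFintype (Fin n → Fin (2 ^ L)) := by
  classical
  set γ := Fin (2 ^ L)
  haveI : Nonempty γ := ⟨⟨0, Nat.pow_pos (by norm_num)⟩⟩
  set c := accessIndex A with hc
  have hcinj := accessIndex_injective A
  set S : Set (Block ⊕ Fin n) := Set.range c with hS
  haveI : Fintype ↥S := Fintype.ofFinite _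
  haveI : Fintype ↥Sᶜ := Fintype.ofFinite _
  -- the big equivalence
  let e1 : Fin n ≃ ↥S := Equiv.ofInjective c hcinj
  let esum : (Block ⊕ Fin n) ≃ ↥S ⊕ ↥Sᶜ := (Equiv.Set.sumCompl S).symm
  let E : ((Block ⊕ Fin n) → γ) ≃ (Fin n → γ) × (↥Sᶜ → γ) :=
    (Equiv.arrowCongr esum (Equiv.refl γ)).trans
      ((Equiv.sumArrowEquivProdArrow _ _ γ).trans
        (Equiv.prodCongr (Equiv.arrowCongr e1.symm (Equiv.refl γ)) (Equiv.refl _)))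
  have hEfst : ∀ (f : (Block ⊕ Fin n) → γ) (i : Fin n), (E f).1 i = f (c i) := by
    intro f i
    simp only [E, e1, esum, Equiv.trans_apply, Equiv.arrowCongr_apply,
      Equiv.sumArrowEquivProdArrow, Equiv.prodCongr_apply, Equiv.coe_fn_mk,
      Prod.map_fst, Equiv.coe_refl, Function.comp_apply, Equiv.symm_symm,
      Equiv.symm_apply_apply, Equiv.refl_apply, Equiv.Set.sumCompl_apply_inl,
      id_eq]
    rfl
  have hobs : observedPaths L n A =
      Prod.fst ∘ ⇑E ∘ ⇑(Equiv.sumArrowEquivProdArrow Block (Fin n) γ).symm := by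
    funext ω
    funext i
    rw [observedPaths_eq]
    exact (hEfst _ i).symm
  rw [hobs, ← PMF.map_comp, ← PMF.map_comp]
  rw [uniform_map_equiv (Equiv.sumArrowEquivProdArrow Block (Fin n) γ).symm,
    uniform_map_equiv E, uniform_map_fst]
end
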